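/- Let k be a finite set of flow constraints and A a set of atoms that cuts every Src-to-Snk path in k (i.e., every such path contains an atom of A). Then the constraint set k \ A, obtained by deleting all edges incident to atoms in A, contains no Src-to-Snk path, and hence is satisfiable. -/

import Mathlib

/-- Nodes of the constraint graph: the transient source `Src` (T), the stable
sink `Snk` (S), and the atoms. -/
inductive Node (A : Type) where
  | Src : Node A
  | Snk : Node A
  | atom : A → Node A

/-- `l` is a path from `u` to `v` in the constraint (edge) set `k`:
a finite nonempty sequence of nodes starting at `u`, ending at `v`, with each
consecutive pair an edge of `k`. -/
def IsPathFrom {A : Type} (k : Set (Node A × Node A)) (u v : Node A)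
    (l : List (Node A)) : Prop :=
  List.Chain' (fun x y => (x, y) ∈ k) l ∧ l.head? = some u ∧ l.getLast? = some v

/-- There is a path from `u` to `v` in `k`. -/
def Reaches {A : Type} (k : Set (Node A × Node A)) (u v : Node A) : Prop :=
  ∃ l, IsPathFrom k u v l

/-- Extend a solution (atoms to the two-point lattice, `false = S ⊑ true = T`)
to all nodes, interpreting `Src` as `T` and `Snk` as `S`. -/
def extSol {A : Type} (σ : A → Bool) : Node A → Bool
  | .Src => true
  | .Snk => false
  | .atom a => σ a

/-- `σ` satisfies every constraint (edge) `u → v` of `k`: `σ(u) ⊑ σ(v)`. -/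
def Satisfies {A : Type} (k : Set (Node A × Node A)) (σ : A → Bool) : Prop :=
  ∀ e ∈ k, extSol σ e.1 ≤ extSol σ e.2

/-- The set of atoms `As` cuts the path `l`: some atom of `As` occurs on `l`. -/
def CutsList {A : Type} (As : Set A) (l : List (Node A)) : Prop :=
  ∃ a ∈ As, Node.atom a ∈ l

/-- `As` is a cut-set for `k`: it cuts every `Src`-to-`Snk` path of `k`. -/
def IsCutSet {A : Type} (As : Set A) (k : Set (Node A × Node A)) : Prop :=
  ∀ l, IsPathFrom k Node.Src Node.Snk l → CutsList As l

/-- The edge `e` is incident to an atom of `As`. -/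
def Incident {A : Type} (As : Set A) (e : Node A × Node A) : Prop :=
  (∃ a ∈ As, e.1 = Node.atom a) ∨ (∃ a ∈ As, e.2 = Node.atom a)

lemma exists_pred' {α : Type*} {S : α → α → Prop} :
    ∀ (l : List α) (u x : α), List.Chain' S l → l.head? = some u → x ∈ l → x ≠ u →
      ∃ y, S y x := by
  intro l
  induction l with
  | nil => simp
  | cons a t ih =>
    intro u x hc hh hm hne
    simp only [List.head?_cons, Option.some.injEq] at hh
    subst hh
    rcases List.mem_cons.1 hm with rfl | hm
    · exact absurd rfl hne
    cases t with
    | nil => simp at hm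
    | cons b t' =>
      by_cases hxb : x = b
      · subst hxb
        exact ⟨a, (List.isChain_cons_cons.1 hc).1⟩
      · exact ih b x hc.tail rfl hm hxb

lemma reaches_step {A : Type} {k : Set (Node A × Node A)} {u v w : Node A}
    (h : Reaches k u v) (he : (v, w) ∈ k) : Reaches k u w := by
  obtain ⟨l, hc, hh, hl⟩ := h
  refine ⟨l ++ [w], ?_, ?_, ?_⟩
  · show List.IsChain _ (l ++ [w])
    rw [List.isChain_append]
    refine ⟨hc, List.isChain_singleton _, ?_⟩
    intro x hx y hy
    rw [hl] at hx
    simp_all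
  · cases l with
    | nil => simp at hh
    | cons a t => simpa using hh
  · simp [List.getLast?_concat]

-- The canonical assignment: `T` iff `Src` reaches the atom in `k`.
open Classical in
noncomputable def canonSol {A : Type} (k : Set (Node A × Node A)) : A → Bool :=
  fun a => if Reaches k Node.Src (Node.atom a) then true else false

/-- Deleting from `k` all edges incident to a cut-set `As` yields a constraint
set with no `Src`-to-`Snk` path, and hence a satisfiable one. -/
theorem cutSet_delete_no_path_and_satisfiable {A : Type}
    (k : Set (Node A × Node A)) (hfin : k.Finite)
    (As : Set A) (hcut : IsCutSet As k) :
    ¬ Reaches {e ∈ k | ¬ Incident As e} Node.Src Node.Snk ∧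
      ∃ σ : A → Bool, Satisfies {e ∈ k | ¬ Incident As e} σ := by
  set k' : Set (Node A × Node A) := {e ∈ k | ¬ Incident As e} with hk'
  have hnp : ¬ Reaches k' Node.Src Node.Snk := by
    rintro ⟨l, hc, hh, hl⟩
    have hpk : IsPathFrom k Node.Src Node.Snk l :=
      ⟨hc.imp (fun _ _ h => h.1), hh, hl⟩
    obtain ⟨a, haA, hal⟩ := hcut l hpk
    have hne : Node.atom a ≠ Node.Src := by simp
    obtain ⟨y, hy⟩ := exists_pred' l Node.Src (Node.atom a) hc hh hal hne
    exact hy.2 (Or.inr ⟨a, haA, rfl⟩)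
  refine ⟨hnp, canonSol k', ?_⟩
  rintro ⟨u, v⟩ he
  have hedge : ∀ x y : Node A, Reaches k' Node.Src x → (x, y) ∈ k' →
      extSol (canonSol k') y = true := by
    intro x y hr hxy
    have hry : Reaches k' Node.Src y := reaches_step hr hxy
    cases y with
    | Src => rfl
    | Snk => exact absurd hry hnp
    | atom b => simp [extSol, canonSol, hry]
  cases u with
  | Snk => simp [extSol]
  | Src =>
    have hr : Reaches k' Node.Src Node.Src :=
      ⟨[Node.Src], List.isChain_singleton _, rfl, rfl⟩
    show true ≤ extSol (canonSol k') v
    rw [hedge Node.Src v hr he]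
  | atom a =>
    by_cases hra : Reaches k' Node.Src (Node.atom a)
    · show canonSol k' a ≤ extSol (canonSol k') v
      rw [hedge (Node.atom a) v hra he]
      exact Bool.le_true _
    · simp [extSol, canonSol, hra]
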